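/- Let (X, ρ) be a compact metric space. The function ρ_I is a metric on the set of idempotent probability measures on X: for all idempotent probability measures μ₁, μ₂, μ₃ on X one has ρ_I(μ₁, μ₂) ≥ 0; ρ_I(μ₁, μ₂) = ρ_I(μ₂, μ₁); ρ_I(μ₁, μ₂) = 0 if and only if μ₁ = μ₂; and ρ_I(μ₁, μ₃) ≤ ρ_I(μ₁, μ₂) + ρ_I(μ₂, μ₃). -/

import Mathlib

noncomputable section

/-- An idempotent probability measure on a topological space `X`:
a functional `μ : C(X, ℝ) → ℝ` which sends constants to their values,
is `max`-`plus` homogeneous, and turns pointwise maxima into maxima. -/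
def IsIPM {X : Type*} [TopologicalSpace X] (μ : C(X, ℝ) → ℝ) : Prop :=
  (∀ c : ℝ, μ (ContinuousMap.const X c) = c) ∧
  (∀ (c : ℝ) (φ : C(X, ℝ)), μ (ContinuousMap.const X c + φ) = c + μ φ) ∧
  (∀ φ ψ : C(X, ℝ), μ (φ ⊔ ψ) = max (μ φ) (μ ψ))

/-- `ξ` is a `(μ₁, μ₂)`-admissible idempotent probability measure on `X × X`. -/
def IsAdmissible {X : Type*} [TopologicalSpace X]
    (μ₁ μ₂ : C(X, ℝ) → ℝ) (ξ : C(X × X, ℝ) → ℝ) : Prop :=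
  IsIPM ξ ∧
  (∀ φ : C(X, ℝ), ξ (φ.comp ⟨Prod.fst, continuous_fst⟩) = μ₁ φ) ∧
  (∀ φ : C(X, ℝ), ξ (φ.comp ⟨Prod.snd, continuous_snd⟩) = μ₂ φ)

/-- The density of an idempotent probability measure. -/
def idemDensity {Z : Type*} [TopologicalSpace Z] (μ : C(Z, ℝ) → ℝ) (z : Z) : EReal :=
  sInf {r : EReal | ∃ φ : C(Z, ℝ), φ ≤ 0 ∧ φ z = 0 ∧ r = (μ φ : EReal)}

/-- The support of an idempotent probability measure. -/
def idemSupp {Z : Type*} [TopologicalSpace Z] (μ : C(Z, ℝ) → ℝ) : Set Z :=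
  {z | ⊥ < idemDensity μ z}

/-- The metric `ρ` of a metric space `X`, as a continuous function on `X × X`. -/
def rhoFun (X : Type*) [MetricSpace X] : C(X × X, ℝ) :=
  ⟨fun p => dist p.1 p.2, continuous_dist⟩

/-- The Uspenskii-type distance function `d_I` on idempotent probability measures. -/
def dI {X : Type*} [MetricSpace X] (μ₁ μ₂ : C(X, ℝ) → ℝ) : ℝ :=
  sInf {r : ℝ | ∃ ξ : C(X × X, ℝ) → ℝ, IsAdmissible μ₁ μ₂ ξ ∧ r = ξ (rhoFun X)}

/-- The distance function `ρ_I` on idempotent probability measures. -/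
def rhoI {X : Type*} [MetricSpace X] (μ₁ μ₂ : C(X, ℝ) → ℝ) : ℝ :=
  sInf {r : ℝ | ∃ ξ : C(X × X, ℝ) → ℝ, IsAdmissible μ₁ μ₂ ξ ∧
    r = sSup {s : ℝ | ∃ p ∈ idemSupp ξ, s = max (ξ (rhoFun X)) (dist p.1 p.2)}}




section Basic
variable {Z : Type*} [TopologicalSpace Z] {μ : C(Z, ℝ) → ℝ}

lemma IsIPM.mono (hμ : IsIPM μ) {φ ψ : C(Z, ℝ)} (h : φ ≤ ψ) : μ φ ≤ μ ψ := by
  have : φ ⊔ ψ = ψ := sup_eq_right.mpr h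
  have h2 := hμ.2.2 φ ψ
  rw [this] at h2
  rw [h2]; exact le_max_left _ _

lemma IsIPM.map_zero (hμ : IsIPM μ) : μ 0 = 0 := by
  have := hμ.1 0
  rwa [show ContinuousMap.const Z (0:ℝ) = 0 from rfl] at this

lemma IsIPM.map_add_const (hμ : IsIPM μ) (φ : C(Z, ℝ)) (c : ℝ) :
    μ (φ + ContinuousMap.const Z c) = μ φ + c := by
  rw [add_comm φ, hμ.2.1, add_comm]

lemma IsIPM.map_sub_const (hμ : IsIPM μ) (φ : C(Z, ℝ)) (c : ℝ) :
    μ (φ - ContinuousMap.const Z c) = μ φ - c := by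
  have := hμ.map_add_const (φ - ContinuousMap.const Z c) c
  rw [sub_add_cancel] at this
  linarith

lemma density_le_test (hμ : IsIPM μ) {z : Z} {ψ : C(Z, ℝ)} (h1 : ψ ≤ 0) (h2 : ψ z = 0) :
    idemDensity μ z ≤ (μ ψ : EReal) :=
  sInf_le ⟨ψ, h1, h2, rfl⟩

lemma density_le_zero (hμ : IsIPM μ) (z : Z) : idemDensity μ z ≤ 0 := by
  have := density_le_test hμ (le_refl (0 : C(Z,ℝ))) (by simp) (z := z)
  rwa [hμ.map_zero] at this

lemma density_ne_top (hμ : IsIPM μ) (z : Z) : idemDensity μ z ≠ ⊤ :=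
  fun h => by simpa [h] using density_le_zero hμ z


lemma ereal_bot_or_real {x : EReal} (hx : x ≠ ⊤) : x = ⊥ ∨ ∃ a : ℝ, x = (a : EReal) := by
  induction x using EReal.rec with
  | bot => exact Or.inl rfl
  | coe a => exact Or.inr ⟨a, rfl⟩
  | top => exact absurd rfl hx

lemma density_bot_or_real (hμ : IsIPM μ) (z : Z) :
    idemDensity μ z = ⊥ ∨ ∃ a : ℝ, idemDensity μ z = (a : EReal) :=
  ereal_bot_or_real (density_ne_top hμ z)

lemma exists_test_lt (hμ : IsIPM μ) {z : Z} {b : ℝ} (h : idemDensity μ z < (b : EReal)) :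
    ∃ ψ : C(Z, ℝ), ψ ≤ 0 ∧ ψ z = 0 ∧ μ ψ < b := by
  rw [idemDensity, sInf_lt_iff] at h
  obtain ⟨r, ⟨ψ, hψ1, hψ2, rfl⟩, hlt⟩ := h
  exact ⟨ψ, hψ1, hψ2, by exact_mod_cast hlt⟩

/-- L3: lower estimate by density. -/
lemma density_add_le (hμ : IsIPM μ) {z : Z} {a : ℝ} (h : (a : EReal) ≤ idemDensity μ z)
    (φ : C(Z, ℝ)) : a + φ z ≤ μ φ := by
  set ψ : C(Z, ℝ) := (φ - ContinuousMap.const Z (φ z)) ⊓ 0 with hψ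
  have hψ1 : ψ ≤ 0 := inf_le_right
  have hψ2 : ψ z = 0 := by
    simp [hψ, ContinuousMap.inf_apply, ContinuousMap.sub_apply]
  have h3 : (a : EReal) ≤ (μ ψ : EReal) := le_trans h (density_le_test hμ hψ1 hψ2)
  have h4 : a ≤ μ ψ := by exact_mod_cast h3
  have h5 : μ ψ ≤ μ (φ - ContinuousMap.const Z (φ z)) := hμ.mono inf_le_left
  rw [hμ.map_sub_const] at h5
  linarith

end Basic

section Main
variable {Z : Type*} [TopologicalSpace Z] [CompactSpace Z] [Nonempty Z] {μ : C(Z, ℝ) → ℝ}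

lemma ipm_finset_sup' (hμ : IsIPM μ) {ι : Type*} {t : Finset ι} (ht : t.Nonempty)
    (f : ι → C(Z, ℝ)) : μ (t.sup' ht f) = t.sup' ht (fun i => μ (f i)) := by
  induction ht using Finset.Nonempty.cons_induction with
  | singleton a => simp
  | cons a s h hs ih =>
      rw [Finset.sup'_cons, Finset.sup'_cons, hμ.2.2, ih]
      exact hs

/-- Main covering lemma (test form). -/
lemma ipm_le_of_forall_test (hμ : IsIPM μ) (φ : C(Z, ℝ)) (c : ℝ)
    (h : ∀ z, ∃ ψ : C(Z, ℝ), ψ ≤ 0 ∧ ψ z = 0 ∧ μ ψ + φ z < c) : μ φ ≤ c := by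
  refine le_of_forall_pos_le_add (fun ε hε => ?_)
  choose ψ h1 h2 h3 using h
  set U : Z → Set Z := fun z => {w | φ w - ε < ψ z w + φ z} with hU
  have hopen : ∀ z, IsOpen (U z) := by
    intro z
    have hcont : Continuous fun w => (ψ z w + φ z) - (φ w - ε) := by continuity
    have h0 : U z = {w | 0 < (ψ z w + φ z) - (φ w - ε)} := by
      ext w; simp only [hU, Set.mem_setOf_eq, sub_pos]
    rw [h0]; exact isOpen_lt continuous_const hcont
  have hcover : (Set.univ : Set Z) ⊆ ⋃ z, U z := by
    intro z _
    refine Set.mem_iUnion.mpr ⟨z, ?_⟩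
    simp only [hU, Set.mem_setOf_eq, h2 z]
    linarith
  obtain ⟨t, hts⟩ := isCompact_univ.elim_finite_subcover U hopen hcover
  have htne : t.Nonempty := by
    obtain ⟨z₀⟩ := ‹Nonempty Z›
    have := hts (Set.mem_univ z₀)
    simp only [Set.mem_iUnion] at this
    obtain ⟨i, hi, _⟩ := this
    exact ⟨i, hi⟩
  set Θ : C(Z, ℝ) := t.sup' htne (fun z => ψ z + ContinuousMap.const Z (φ z)) with hΘ
  have hle : φ - ContinuousMap.const Z ε ≤ Θ := by
    intro w
    have := hts (Set.mem_univ w)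
    simp only [Set.mem_iUnion] at this
    obtain ⟨i, hi, hwi⟩ := this
    have : φ w - ε ≤ ψ i w + φ i := le_of_lt hwi
    calc (φ - ContinuousMap.const Z ε) w = φ w - ε := by
          simp [ContinuousMap.sub_apply]
      _ ≤ ψ i w + φ i := this
      _ = (ψ i + ContinuousMap.const Z (φ i)) w := by simp
      _ ≤ Θ w := by
          rw [hΘ, ContinuousMap.sup'_apply]
          exact Finset.le_sup' (f := fun z => (ψ z + ContinuousMap.const Z (φ z)) w) hi
  have hμΘ : μ Θ < c := by
    rw [hΘ, ipm_finset_sup' hμ]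
    rw [Finset.sup'_lt_iff]
    intro i _
    rw [hμ.map_add_const]
    linarith [h3 i]
  have := hμ.mono hle
  rw [hμ.map_sub_const] at this
  linarith

/-- Main covering lemma (density form). -/
lemma ipm_le_of_forall_density (hμ : IsIPM μ) (φ : C(Z, ℝ)) (c : ℝ)
    (h : ∀ z, idemDensity μ z < ((c - φ z : ℝ) : EReal)) : μ φ ≤ c := by
  refine ipm_le_of_forall_test hμ φ c (fun z => ?_)
  obtain ⟨ψ, h1, h2, h3⟩ := exists_test_lt hμ (h z)
  exact ⟨ψ, h1, h2, by linarith⟩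

/-- D0: densities get arbitrarily close to 0. -/
lemma exists_density_near_zero (hμ : IsIPM μ) {ε : ℝ} (hε : 0 < ε) :
    ∃ z : Z, ∃ a : ℝ, idemDensity μ z = (a : EReal) ∧ -ε ≤ a := by
  by_contra hcon
  push_neg at hcon
  have h : ∀ z, idemDensity μ z < ((-ε - (0:C(Z,ℝ)) z : ℝ) : EReal) := by
    intro z
    simp only [ContinuousMap.zero_apply, sub_zero]
    rcases density_bot_or_real hμ z with hd | ⟨a, hd⟩
    · rw [hd]; exact EReal.bot_lt_coe _
    · rw [hd]
      have := hcon z a hd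
      exact_mod_cast this
  have := ipm_le_of_forall_density hμ 0 (-ε) h
  rw [hμ.map_zero] at this
  linarith

lemma exists_density_real (hμ : IsIPM μ) : ∃ z : Z, ∃ a : ℝ, idemDensity μ z = (a : EReal) := by
  obtain ⟨z, a, h, _⟩ := exists_density_near_zero hμ one_pos
  exact ⟨z, a, h⟩

/-- The representation set. -/
def reprSet (μ : C(Z, ℝ) → ℝ) (φ : C(Z, ℝ)) : Set ℝ :=
  {r | ∃ z : Z, ∃ a : ℝ, idemDensity μ z = (a : EReal) ∧ r = a + φ z}

lemma reprSet_nonempty (hμ : IsIPM μ) (φ : C(Z, ℝ)) : (reprSet μ φ).Nonempty := by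
  obtain ⟨z, a, h⟩ := exists_density_real hμ
  exact ⟨a + φ z, z, a, h, rfl⟩

lemma reprSet_le (hμ : IsIPM μ) (φ : C(Z, ℝ)) {r : ℝ} (h : r ∈ reprSet μ φ) : r ≤ μ φ := by
  obtain ⟨z, a, hd, rfl⟩ := h
  exact density_add_le hμ (le_of_eq hd.symm) φ

lemma reprSet_bddAbove (hμ : IsIPM μ) (φ : C(Z, ℝ)) : BddAbove (reprSet μ φ) :=
  ⟨μ φ, fun _ h => reprSet_le hμ φ h⟩

/-- Representation: μ φ = sSup of the representation set. -/
lemma ipm_eq_sSup_reprSet (hμ : IsIPM μ) (φ : C(Z, ℝ)) : μ φ = sSup (reprSet μ φ) := by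
  refine le_antisymm ?_ (csSup_le (reprSet_nonempty hμ φ) (fun r h => reprSet_le hμ φ h))
  refine le_of_forall_pos_le_add (fun ε hε => ?_)
  refine ipm_le_of_forall_density hμ φ _ (fun z => ?_)
  rcases density_bot_or_real hμ z with hd | ⟨a, hd⟩
  · rw [hd]; exact EReal.bot_lt_coe _
  · rw [hd]
    have hmem : a + φ z ∈ reprSet μ φ := ⟨z, a, hd, rfl⟩
    have h1 := le_csSup (reprSet_bddAbove hμ φ) hmem
    have : a < sSup (reprSet μ φ) + ε - φ z := by linarith
    exact_mod_cast this

/-- Comparison lemma. -/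
lemma ipm_le_ipm_add (hμ : IsIPM μ) (φ ψ : C(Z, ℝ)) (c : ℝ)
    (h : ∀ z : Z, ∀ a : ℝ, idemDensity μ z = (a : EReal) → φ z ≤ ψ z + c) :
    μ φ ≤ μ ψ + c := by
  refine le_of_forall_pos_le_add (fun ε hε => ?_)
  refine ipm_le_of_forall_density hμ φ _ (fun z => ?_)
  rcases density_bot_or_real hμ z with hd | ⟨a, hd⟩
  · rw [hd]; exact EReal.bot_lt_coe _
  · rw [hd]
    have h1 := h z a hd
    have h2 : a + ψ z ≤ μ ψ := density_add_le hμ (le_of_eq hd.symm) ψ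
    have : a < μ ψ + c + ε - φ z := by linarith
    exact_mod_cast this

end Main

section Push
variable {Z W : Type*} [TopologicalSpace Z] [CompactSpace Z] [Nonempty Z] [MetricSpace W]
  {μ : C(Z, ℝ) → ℝ} {ν : C(W, ℝ) → ℝ} {f : C(Z, W)}

lemma density_le_push (hμ : IsIPM μ) (hf : ∀ φ : C(W, ℝ), μ (φ.comp f) = ν φ) (z : Z) :
    idemDensity μ z ≤ idemDensity ν (f z) := by
  refine le_sInf (fun r hr => ?_)
  obtain ⟨φ, h1, h2, rfl⟩ := hr
  have hle : φ.comp f ≤ 0 := fun z' => h1 (f z')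
  have hz : (φ.comp f) z = 0 := h2
  have := density_le_test hμ hle hz
  rwa [hf φ] at this

lemma push_density_le (hμ : IsIPM μ) (hν : IsIPM ν)
    (hf : ∀ φ : C(W, ℝ), μ (φ.comp f) = ν φ) (w : W) (c : ℝ)
    (h : ∀ z, f z = w → idemDensity μ z < (c : EReal)) :
    idemDensity ν w ≤ (c : EReal) := by
  have main : ∀ ε : ℝ, 0 < ε → idemDensity ν w ≤ ((c + ε : ℝ) : EReal) := by
    intro ε hε
    -- Step 1: an open set U containing the fiber with small tests
    have key : ∃ U : Set Z, IsOpen U ∧ (∀ z, f z = w → z ∈ U) ∧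
        (∀ z ∈ U, ∃ ψ : C(Z, ℝ), ψ ≤ 0 ∧ ψ z = 0 ∧ μ ψ < c + ε) := by
      by_cases hfib : ∃ z, f z = w
      · have hchoice : ∀ z : {z : Z // f z = w}, ∃ ψ : C(Z, ℝ), ψ ≤ 0 ∧ ψ (z : Z) = 0 ∧ μ ψ < c :=
          fun z => exists_test_lt hμ (h z z.2)
        choose ψ hψ1 hψ2 hψ3 using hchoice
        have hfibcpt : IsCompact (f ⁻¹' {w}) :=
          (isClosed_singleton.preimage f.continuous).isCompact
        have hcover : f ⁻¹' {w} ⊆ ⋃ z : {z : Z // f z = w}, {z' | -ε < ψ z z'} := by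
          intro z' hz'
          refine Set.mem_iUnion.mpr ⟨⟨z', hz'⟩, ?_⟩
          simp only [Set.mem_setOf_eq, hψ2 ⟨z', hz'⟩]
          linarith
        obtain ⟨t, ht⟩ := hfibcpt.elim_finite_subcover _
          (fun z => isOpen_lt continuous_const (ψ z).continuous) hcover
        obtain ⟨z₀, hz₀⟩ := hfib
        have htne : t.Nonempty := by
          have := ht (show z₀ ∈ f ⁻¹' {w} from hz₀)
          simp only [Set.mem_iUnion] at this
          obtain ⟨i, hi, _⟩ := this
          exact ⟨i, hi⟩
        set Ψ : C(Z, ℝ) := t.sup' htne ψ with hΨ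
        have hμΨ : μ Ψ < c := by
          rw [hΨ, ipm_finset_sup' hμ, Finset.sup'_lt_iff]
          exact fun i _ => hψ3 i
        refine ⟨{z' | -ε < Ψ z'}, isOpen_lt continuous_const Ψ.continuous, ?_, ?_⟩
        · intro z hz
          have := ht (show z ∈ f ⁻¹' {w} from hz)
          simp only [Set.mem_iUnion] at this
          obtain ⟨i, hi, hzi⟩ := this
          simp only [Set.mem_setOf_eq] at hzi ⊢
          calc -ε < ψ i z := hzi
            _ ≤ Ψ z := by
                rw [hΨ, ContinuousMap.sup'_apply]
                exact Finset.le_sup' (f := fun j => ψ j z) hi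
        · intro z' hz'
          simp only [Set.mem_setOf_eq] at hz'
          refine ⟨(Ψ - ContinuousMap.const Z (Ψ z')) ⊓ 0, inf_le_right, ?_, ?_⟩
          · simp [ContinuousMap.inf_apply, ContinuousMap.sub_apply]
          · have h5 : μ ((Ψ - ContinuousMap.const Z (Ψ z')) ⊓ 0) ≤
                μ (Ψ - ContinuousMap.const Z (Ψ z')) := hμ.mono inf_le_left
            rw [hμ.map_sub_const] at h5
            linarith
      · exact ⟨∅, isOpen_empty, fun z hz => absurd ⟨z, hz⟩ hfib, fun z hz => absurd hz (by simp)⟩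
    obtain ⟨U, hUopen, hUfib, hUprop⟩ := key
    -- Step 2: δ
    have hK : IsClosed (f '' Uᶜ) :=
      ((hUopen.isClosed_compl.isCompact).image f.continuous).isClosed
    have hwK : w ∉ f '' Uᶜ := by
      rintro ⟨z, hz1, hz2⟩
      exact hz1 (hUfib z hz2)
    obtain ⟨δ, hδpos, hball⟩ := Metric.isOpen_iff.mp hK.isOpen_compl w hwK
    -- Step 3: the Urysohn-type test on W
    set M : ℝ := |c| + 1 + ε with hM
    have hMpos : 0 < M := by positivity
    have hcont : Continuous fun v : W => -M * min 1 (dist v w / δ) := by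
      apply Continuous.mul continuous_const
      exact Continuous.min continuous_const ((continuous_id.dist continuous_const).div_const δ)
    set φw : C(W, ℝ) := ⟨fun v => -M * min 1 (dist v w / δ), hcont⟩ with hφw
    have hφw1 : φw ≤ 0 := by
      intro v
      have h1 : (0:ℝ) ≤ min 1 (dist v w / δ) := le_min one_pos.le (by positivity)
      simpa [hφw] using mul_nonpos_of_nonpos_of_nonneg (neg_nonpos.mpr hMpos.le) h1
    have hφw2 : φw w = 0 := by simp [hφw]
    have hbound : μ (φw.comp f) ≤ c + ε := by
      refine ipm_le_of_forall_test hμ _ _ (fun z => ?_)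
      by_cases hz : dist (f z) w < δ
      · have hzU : z ∈ U := by
          by_contra hzU
          exact hball (Metric.mem_ball.mpr hz) ⟨z, hzU, rfl⟩
        obtain ⟨ψ', t1, t2, t3⟩ := hUprop z hzU
        refine ⟨ψ', t1, t2, ?_⟩
        have : (φw.comp f) z ≤ 0 := hφw1 (f z)
        simp only [ContinuousMap.comp_apply] at this ⊢
        linarith
      · refine ⟨0, le_refl _, rfl, ?_⟩
        push_neg at hz
        have h1 : (1:ℝ) ≤ dist (f z) w / δ := (one_le_div hδpos).mpr hz
        have h2 : (φw.comp f) z = -M := by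
          simp only [ContinuousMap.comp_apply, hφw, ContinuousMap.coe_mk, min_eq_left h1]
          ring
        rw [hμ.map_zero, h2]
        have := neg_abs_le c
        simp only [hM]
        linarith
    have hd : idemDensity ν w ≤ (ν φw : EReal) := density_le_test hν hφw1 hφw2
    rw [← hf φw] at hd
    exact le_trans hd (by exact_mod_cast hbound)
  rcases density_bot_or_real hν w with hd | ⟨a, hd⟩
  · rw [hd]; exact bot_le
  · rw [hd]
    have : a ≤ c := by
      refine le_of_forall_pos_le_add (fun ε hε => ?_)
      have := main ε hε
      rw [hd] at this
      exact_mod_cast this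
    exact_mod_cast this

lemma exists_fiber_density (hμ : IsIPM μ) (hν : IsIPM ν)
    (hf : ∀ φ : C(W, ℝ), μ (φ.comp f) = ν φ) {w : W} {a : ℝ}
    (hd : idemDensity ν w = (a : EReal)) {ε : ℝ} (hε : 0 < ε) :
    ∃ z : Z, ∃ b : ℝ, f z = w ∧ idemDensity μ z = (b : EReal) ∧ a - ε ≤ b := by
  by_contra hcon
  push_neg at hcon
  have hlt : ∀ z, f z = w → idemDensity μ z < ((a - ε : ℝ) : EReal) := by
    intro z hz
    rcases density_bot_or_real hμ z with h | ⟨b, h⟩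
    · rw [h]; exact EReal.bot_lt_coe _
    · rw [h]
      have := hcon z b hz h
      exact_mod_cast this
  have h2 := push_density_le hμ hν hf w (a - ε) hlt
  rw [hd] at h2
  have : a ≤ a - ε := by exact_mod_cast h2
  linarith

end Push

section SupHelpers

lemma mySSup_le_sSup {s t : Set ℝ} (hs : s.Nonempty) (hbt : BddAbove t)
    (h : ∀ r ∈ s, ∃ r' ∈ t, r ≤ r') : sSup s ≤ sSup t :=
  csSup_le hs fun r hr => by
    obtain ⟨r', h1, h2⟩ := h r hr
    exact h2.trans (le_csSup hbt h1)

lemma mySSup_eq_sSup {s t : Set ℝ} (hs : s.Nonempty) (ht : t.Nonempty)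
    (hbs : BddAbove s) (hbt : BddAbove t)
    (h1 : ∀ r ∈ s, ∃ r' ∈ t, r ≤ r')
    (h2 : ∀ r ∈ t, ∀ ε : ℝ, 0 < ε → ∃ r' ∈ s, r - ε ≤ r') : sSup s = sSup t := by
  refine le_antisymm (mySSup_le_sSup hs hbt h1) (csSup_le ht fun r hr => ?_)
  refine le_of_forall_pos_le_add fun ε hε => ?_
  obtain ⟨r', h3, h4⟩ := h2 r hr ε hε
  have := le_csSup hbs h3
  linarith

end SupHelpers

section Lip
variable {Z : Type*} [TopologicalSpace Z] [CompactSpace Z] {μ : C(Z, ℝ) → ℝ}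

lemma ipm_le_add_dist (hμ : IsIPM μ) (φ ψ : C(Z, ℝ)) : μ φ ≤ μ ψ + dist φ ψ := by
  have hle : φ ≤ ψ + ContinuousMap.const Z (dist φ ψ) := by
    rw [ContinuousMap.le_def]
    intro z
    have h1 := ContinuousMap.dist_apply_le_dist (f := φ) (g := ψ) z
    rw [Real.dist_eq] at h1
    have h2 := le_abs_self (φ z - ψ z)
    have h3 : (ψ + ContinuousMap.const Z (dist φ ψ)) z = ψ z + dist φ ψ := by
      simp
    rw [h3]
    linarith
  have := hμ.mono hle
  rwa [hμ.map_add_const] at this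

lemma ipm_continuous (hμ : IsIPM μ) : Continuous μ := by
  refine (LipschitzWith.of_dist_le_mul (K := 1) fun φ ψ => ?_).continuous
  rw [Real.dist_eq, NNReal.coe_one, one_mul]
  rw [abs_sub_le_iff]
  constructor
  · have := ipm_le_add_dist hμ φ ψ; linarith
  · have := ipm_le_add_dist hμ ψ φ; rw [dist_comm] at this; linarith

end Lip

section Iter
variable {X : Type*} [MetricSpace X] [CompactSpace X]
  {μ₁ μ₂ : C(X, ℝ) → ℝ}

/-- Inner integration: `x ↦ μ₂ (φ(x, ·))`. -/
def innerIPM (μ₂ : C(X, ℝ) → ℝ) (hμ₂ : IsIPM μ₂) (φ : C(X × X, ℝ)) : C(X, ℝ) :=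
  ⟨fun x => μ₂ (φ.curry x), (ipm_continuous hμ₂).comp φ.curry.continuous⟩

/-- Iterated idempotent measure on the product. -/
def iterIPM (μ₁ μ₂ : C(X, ℝ) → ℝ) (hμ₂ : IsIPM μ₂) (φ : C(X × X, ℝ)) : ℝ :=
  μ₁ (innerIPM μ₂ hμ₂ φ)


lemma iterIPM_admissible (hμ₁ : IsIPM μ₁) (hμ₂ : IsIPM μ₂) :
    IsAdmissible μ₁ μ₂ (iterIPM μ₁ μ₂ hμ₂) := by
  refine ⟨⟨?_, ?_, ?_⟩, ?_, ?_⟩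
  · intro c
    have h : innerIPM μ₂ hμ₂ (ContinuousMap.const (X × X) c) = ContinuousMap.const X c := by
      ext x
      simp only [innerIPM, ContinuousMap.coe_mk, ContinuousMap.const_apply]
      have : (ContinuousMap.const (X × X) c).curry x = ContinuousMap.const X c := by
        ext y; simp [ContinuousMap.curry_apply]
      rw [this, hμ₂.1]
    rw [iterIPM, h, hμ₁.1]
  · intro c φ
    have h : innerIPM μ₂ hμ₂ (ContinuousMap.const (X × X) c + φ) =
        ContinuousMap.const X c + innerIPM μ₂ hμ₂ φ := by
      ext x
      simp only [innerIPM, ContinuousMap.coe_mk, ContinuousMap.add_apply,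
        ContinuousMap.const_apply]
      have : (ContinuousMap.const (X × X) c + φ).curry x =
          ContinuousMap.const X c + φ.curry x := by
        ext y; simp [ContinuousMap.curry_apply]
      rw [this, hμ₂.2.1]
    rw [iterIPM, h, hμ₁.2.1, iterIPM]
  · intro φ ψ
    have h : innerIPM μ₂ hμ₂ (φ ⊔ ψ) = innerIPM μ₂ hμ₂ φ ⊔ innerIPM μ₂ hμ₂ ψ := by
      ext x
      simp only [innerIPM, ContinuousMap.coe_mk, ContinuousMap.sup_apply]
      have : (φ ⊔ ψ).curry x = φ.curry x ⊔ ψ.curry x := by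
        ext y; simp [ContinuousMap.curry_apply]
      rw [this, hμ₂.2.2]
    rw [iterIPM, h, hμ₁.2.2]; rfl
  · intro φ
    have h : innerIPM μ₂ hμ₂ (φ.comp ⟨Prod.fst, continuous_fst⟩) = φ := by
      ext x
      simp only [innerIPM, ContinuousMap.coe_mk]
      have : (φ.comp ⟨Prod.fst, continuous_fst⟩).curry x = ContinuousMap.const X (φ x) := by
        ext y; simp [ContinuousMap.curry_apply]
      rw [this, hμ₂.1]
    rw [iterIPM, h]
  · intro φ
    have h : innerIPM μ₂ hμ₂ (φ.comp ⟨Prod.snd, continuous_snd⟩) =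
        ContinuousMap.const X (μ₂ φ) := by
      ext x
      simp only [innerIPM, ContinuousMap.coe_mk, ContinuousMap.const_apply]
      have : (φ.comp ⟨Prod.snd, continuous_snd⟩).curry x = φ := by
        ext y; simp [ContinuousMap.curry_apply]
      rw [this]
    rw [iterIPM, h, hμ₁.1]

end Iter




section Main2
variable {X : Type*} [MetricSpace X] [CompactSpace X] [Nonempty X]

def valSet (ξ : C(X × X, ℝ) → ℝ) : Set ℝ :=
  {s : ℝ | ∃ p ∈ idemSupp ξ, s = max (ξ (rhoFun X)) (dist p.1 p.2)}

def suppVal (ξ : C(X × X, ℝ) → ℝ) : ℝ := sSup (valSet ξ)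

def rhoSet (μ₁ μ₂ : C(X, ℝ) → ℝ) : Set ℝ :=
  {r : ℝ | ∃ ξ : C(X × X, ℝ) → ℝ, IsAdmissible μ₁ μ₂ ξ ∧ r = suppVal ξ}

lemma rhoI_eq (μ₁ μ₂ : C(X, ℝ) → ℝ) : rhoI μ₁ μ₂ = sInf (rhoSet μ₁ μ₂) := rfl

lemma mem_supp_of_density_real {ξ : C(X × X, ℝ) → ℝ} {p : X × X} {a : ℝ}
    (h : idemDensity ξ p = (a : EReal)) : p ∈ idemSupp ξ := by
  simp only [idemSupp, Set.mem_setOf_eq, h]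
  exact EReal.bot_lt_coe a

lemma valSet_bddAbove (ξ : C(X × X, ℝ) → ℝ) : BddAbove (valSet ξ) := by
  refine ⟨max (ξ (rhoFun X)) (Metric.diam (Set.univ : Set X)), fun s hs => ?_⟩
  obtain ⟨p, _, rfl⟩ := hs
  have hb : Bornology.IsBounded (Set.univ : Set X) := isCompact_univ.isBounded
  have := Metric.dist_le_diam_of_mem hb (Set.mem_univ p.1) (Set.mem_univ p.2)
  exact max_le_max (le_refl _) this

lemma dist_le_suppVal {ξ : C(X × X, ℝ) → ℝ} {p : X × X} (hp : p ∈ idemSupp ξ) :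
    dist p.1 p.2 ≤ suppVal ξ := by
  have hmem : max (ξ (rhoFun X)) (dist p.1 p.2) ∈ valSet ξ := ⟨p, hp, rfl⟩
  exact le_trans (le_max_right _ _) (le_csSup (valSet_bddAbove ξ) hmem)

lemma rho_le_suppVal {ξ : C(X × X, ℝ) → ℝ} {p : X × X} (hp : p ∈ idemSupp ξ) :
    ξ (rhoFun X) ≤ suppVal ξ := by
  have hmem : max (ξ (rhoFun X)) (dist p.1 p.2) ∈ valSet ξ := ⟨p, hp, rfl⟩
  exact le_trans (le_max_left _ _) (le_csSup (valSet_bddAbove ξ) hmem)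

lemma supp_nonempty_ipm {ξ : C(X × X, ℝ) → ℝ} (hξ : IsIPM ξ) : (idemSupp ξ).Nonempty := by
  obtain ⟨p, a, h⟩ := exists_density_real hξ
  exact ⟨p, mem_supp_of_density_real h⟩

lemma suppVal_nonneg {ξ : C(X × X, ℝ) → ℝ} (hξ : IsIPM ξ) : 0 ≤ suppVal ξ := by
  obtain ⟨p, hp⟩ := supp_nonempty_ipm hξ
  exact le_trans dist_nonneg (dist_le_suppVal hp)

lemma rhoSet_nonneg {μ₁ μ₂ : C(X, ℝ) → ℝ} {r : ℝ} (hr : r ∈ rhoSet μ₁ μ₂) : 0 ≤ r := by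
  obtain ⟨ξ, hξ, rfl⟩ := hr
  exact suppVal_nonneg hξ.1

lemma rhoSet_bddBelow (μ₁ μ₂ : C(X, ℝ) → ℝ) : BddBelow (rhoSet μ₁ μ₂) :=
  ⟨0, fun _ h => rhoSet_nonneg h⟩

lemma rhoSet_nonempty {μ₁ μ₂ : C(X, ℝ) → ℝ} (hμ₁ : IsIPM μ₁) (hμ₂ : IsIPM μ₂) :
    (rhoSet μ₁ μ₂).Nonempty :=
  ⟨suppVal (iterIPM μ₁ μ₂ hμ₂), iterIPM μ₁ μ₂ hμ₂, iterIPM_admissible hμ₁ hμ₂, rfl⟩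

lemma rhoI_nonneg (μ₁ μ₂ : C(X, ℝ) → ℝ) : 0 ≤ rhoI μ₁ μ₂ := by
  rw [rhoI_eq]
  exact Real.sInf_nonneg fun r hr => rhoSet_nonneg hr

-- Symmetry
def swapC (X : Type*) [TopologicalSpace X] : C(X × X, X × X) := ⟨Prod.swap, continuous_swap⟩

lemma swap_admissible {μ₁ μ₂ : C(X, ℝ) → ℝ} {ξ : C(X × X, ℝ) → ℝ}
    (hξ : IsAdmissible μ₁ μ₂ ξ) :
    IsAdmissible μ₂ μ₁ (fun φ => ξ (φ.comp (swapC X))) := by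
  obtain ⟨⟨h1, h2, h3⟩, hm1, hm2⟩ := hξ
  refine ⟨⟨?_, ?_, ?_⟩, ?_, ?_⟩
  · intro c
    have : (ContinuousMap.const (X × X) c).comp (swapC X) = ContinuousMap.const (X × X) c := by
      ext p; rfl
    simp only [this, h1]
  · intro c φ
    have : (ContinuousMap.const (X × X) c + φ).comp (swapC X) =
        ContinuousMap.const (X × X) c + φ.comp (swapC X) := by
      ext p; simp [swapC]
    simp only [this, h2]
  · intro φ ψ
    have : (φ ⊔ ψ).comp (swapC X) = φ.comp (swapC X) ⊔ ψ.comp (swapC X) := by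
      ext p; simp [swapC]
    simp only [this, h3]
  · intro φ
    have : (φ.comp ⟨Prod.fst, continuous_fst⟩).comp (swapC X) =
        φ.comp ⟨Prod.snd, continuous_snd⟩ := by ext p; rfl
    simp only [this, hm2]
  · intro φ
    have : (φ.comp ⟨Prod.snd, continuous_snd⟩).comp (swapC X) =
        φ.comp ⟨Prod.fst, continuous_fst⟩ := by ext p; rfl
    simp only [this, hm1]

lemma swap_density (ξ : C(X × X, ℝ) → ℝ) (p : X × X) :
    idemDensity (fun φ => ξ (φ.comp (swapC X))) p = idemDensity ξ p.swap := by
  unfold idemDensity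
  congr 1
  ext r
  constructor
  · rintro ⟨φ, hφ1, hφ2, rfl⟩
    refine ⟨φ.comp (swapC X), fun q => hφ1 q.swap, ?_, rfl⟩
    show φ (p.swap.swap) = 0
    rwa [Prod.swap_swap]
  · rintro ⟨φ, hφ1, hφ2, rfl⟩
    refine ⟨φ.comp (swapC X), fun q => hφ1 q.swap, hφ2, ?_⟩
    have h4 : (φ.comp (swapC X)).comp (swapC X) = φ := by
      ext q; show φ q.swap.swap = φ q; rw [Prod.swap_swap]
    show ((ξ φ : ℝ) : EReal) = ((ξ ((φ.comp (swapC X)).comp (swapC X)) : ℝ) : EReal)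
    rw [h4]

lemma swap_suppVal (ξ : C(X × X, ℝ) → ℝ) :
    suppVal (fun φ => ξ (φ.comp (swapC X))) = suppVal ξ := by
  unfold suppVal
  have hρ : (rhoFun X).comp (swapC X) = rhoFun X := by
    ext p; exact dist_comm p.2 p.1
  have hval : valSet (fun φ => ξ (φ.comp (swapC X))) = valSet ξ := by
    ext s
    constructor
    · rintro ⟨p, hp, rfl⟩
      rw [idemSupp, Set.mem_setOf_eq, swap_density] at hp
      refine ⟨p.swap, hp, ?_⟩
      simp only [hρ]
      rw [dist_comm p.1 p.2]
      rfl
    · rintro ⟨p, hp, rfl⟩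
      refine ⟨p.swap, ?_, ?_⟩
      · rw [idemSupp, Set.mem_setOf_eq, swap_density, Prod.swap_swap]
        exact hp
      · simp only [hρ]
        rw [dist_comm p.1 p.2]
        rfl
  rw [hval]

lemma rhoSet_symm (μ₁ μ₂ : C(X, ℝ) → ℝ) : rhoSet μ₁ μ₂ = rhoSet μ₂ μ₁ := by
  have key : ∀ ν₁ ν₂ : C(X, ℝ) → ℝ, rhoSet ν₁ ν₂ ⊆ rhoSet ν₂ ν₁ := by
    rintro ν₁ ν₂ r ⟨ξ, hξ, rfl⟩
    exact ⟨fun φ => ξ (φ.comp (swapC X)), swap_admissible hξ, (swap_suppVal ξ).symm⟩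
  exact le_antisymm (key μ₁ μ₂) (key μ₂ μ₁)

lemma rhoI_symm (μ₁ μ₂ : C(X, ℝ) → ℝ) : rhoI μ₁ μ₂ = rhoI μ₂ μ₁ := by
  rw [rhoI_eq, rhoI_eq, rhoSet_symm]

end Main2

section Main3
variable {X : Type*} [MetricSpace X] [CompactSpace X] [Nonempty X]

lemma density_bot_of_forall_nat {Z : Type*} [TopologicalSpace Z] {μ : C(Z, ℝ) → ℝ} {z : Z}
    (hμ : IsIPM μ) (h : ∀ n : ℕ, idemDensity μ z ≤ ((-(n : ℝ) : ℝ) : EReal)) :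
    idemDensity μ z = ⊥ := by
  rcases ereal_bot_or_real (density_ne_top hμ z) with hd | ⟨a, hd⟩
  · exact hd
  · exfalso
    obtain ⟨n, hn⟩ := exists_nat_gt (-a)
    have := h n
    rw [hd] at this
    have : a ≤ -(n : ℝ) := by exact_mod_cast this
    linarith

def diagC (X : Type*) [TopologicalSpace X] : C(X, X × X) :=
  ⟨fun x => (x, x), Continuous.prodMk continuous_id continuous_id⟩

variable {μ : C(X, ℝ) → ℝ}

lemma diag_admissible (hμ : IsIPM μ) :
    IsAdmissible μ μ (fun φ => μ (φ.comp (diagC X))) := by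
  refine ⟨⟨?_, ?_, ?_⟩, ?_, ?_⟩
  · intro c
    have : (ContinuousMap.const (X × X) c).comp (diagC X) = ContinuousMap.const X c := by
      ext x; rfl
    simp only [this, hμ.1]
  · intro c φ
    have : (ContinuousMap.const (X × X) c + φ).comp (diagC X) =
        ContinuousMap.const X c + φ.comp (diagC X) := by ext x; simp [diagC]
    simp only [this, hμ.2.1]
  · intro φ ψ
    have : (φ ⊔ ψ).comp (diagC X) = φ.comp (diagC X) ⊔ ψ.comp (diagC X) := by
      ext x; simp [diagC]
    simp only [this, hμ.2.2]
  · intro φ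
    have : (φ.comp ⟨Prod.fst, continuous_fst⟩).comp (diagC X) = φ := by ext x; rfl
    simp only [this]
  · intro φ
    have : (φ.comp ⟨Prod.snd, continuous_snd⟩).comp (diagC X) = φ := by ext x; rfl
    simp only [this]

lemma diag_rho (hμ : IsIPM μ) : (fun φ => μ (φ.comp (diagC X))) (rhoFun X) = 0 := by
  have : (rhoFun X).comp (diagC X) = 0 := by
    ext x
    show dist x x = 0
    exact dist_self x
  simp only [this, hμ.map_zero]

lemma diag_supp (hμ : IsIPM μ) {p : X × X} (hp : p ∈ idemSupp (fun φ => μ (φ.comp (diagC X)))) :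
    p.1 = p.2 := by
  by_contra hne
  have hδ : 0 < dist p.1 p.2 / 2 := by
    have := dist_pos.mpr hne
    linarith
  set δ := dist p.1 p.2 / 2 with hδdef
  have hbot : idemDensity (fun φ => μ (φ.comp (diagC X))) p = ⊥ := by
    refine density_bot_of_forall_nat (diag_admissible hμ).1 (fun n => ?_)
    have hcont : Continuous fun q : X × X => -(n : ℝ) * min 1 (dist q p / δ) := by
      apply Continuous.mul continuous_const
      exact Continuous.min continuous_const ((continuous_id.dist continuous_const).div_const δ)
    set φn : C(X × X, ℝ) := ⟨fun q => -(n : ℝ) * min 1 (dist q p / δ), hcont⟩ with hφn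
    have h1 : φn ≤ 0 := by
      rw [ContinuousMap.le_def]
      intro q
      have : (0:ℝ) ≤ min 1 (dist q p / δ) := le_min one_pos.le (by positivity)
      show -(n : ℝ) * min 1 (dist q p / δ) ≤ 0
      have hn : (0:ℝ) ≤ (n:ℝ) := Nat.cast_nonneg n
      exact mul_nonpos_of_nonpos_of_nonneg (by linarith) this
    have h2 : φn p = 0 := by
      show -(n : ℝ) * min 1 (dist p p / δ) = 0
      simp
    have h3 : φn.comp (diagC X) = ContinuousMap.const X (-(n : ℝ)) := by
      ext x
      show -(n : ℝ) * min 1 (dist (x, x) p / δ) = -(n : ℝ)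
      have hd : δ ≤ dist (x, x) p := by
        rw [Prod.dist_eq]
        have h4 := dist_triangle p.1 x p.2
        have h5 : dist x p.2 = dist p.2 x := dist_comm x p.2
        rcases le_total (dist p.1 x) (dist p.2 x) with h | h
        · have : δ ≤ dist p.2 x := by rw [hδdef]; rw [dist_comm x p.2] at h4; linarith
          calc δ ≤ dist p.2 x := this
            _ = dist ((x,x).2) p.2 := dist_comm p.2 x
            _ ≤ _ := le_sup_right
        · have : δ ≤ dist p.1 x := by rw [hδdef]; rw [dist_comm x p.2] at h4; linarith
          calc δ ≤ dist p.1 x := this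
            _ = dist ((x,x).1) p.1 := dist_comm p.1 x
            _ ≤ _ := le_sup_left
      have : (1:ℝ) ≤ dist (x, x) p / δ := (one_le_div hδ).mpr hd
      rw [min_eq_left this, mul_one]
    have := density_le_test (diag_admissible hμ).1 h1 h2 (z := p)
    have heq : μ (φn.comp (diagC X)) = -(n:ℝ) := by rw [h3, hμ.1]
    calc idemDensity (fun φ => μ (φ.comp (diagC X))) p
        ≤ ((μ (φn.comp (diagC X)) : ℝ) : EReal) := this
      _ = ((-(n:ℝ) : ℝ) : EReal) := by rw [heq]
  rw [idemSupp, Set.mem_setOf_eq, hbot] at hp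
  exact lt_irrefl _ hp

lemma diag_suppVal (hμ : IsIPM μ) : suppVal (fun φ => μ (φ.comp (diagC X))) = 0 := by
  have hval : valSet (fun φ => μ (φ.comp (diagC X))) = {0} := by
    ext s
    constructor
    · rintro ⟨p, hp, rfl⟩
      have h1 := diag_supp hμ hp
      have h2 : dist p.1 p.2 = 0 := by rw [h1, dist_self]
      rw [diag_rho hμ, h2]
      simp
    · rintro rfl
      obtain ⟨p, hp⟩ := supp_nonempty_ipm (diag_admissible hμ).1
      refine ⟨p, hp, ?_⟩
      have h1 := diag_supp hμ hp
      have h2 : dist p.1 p.2 = 0 := by rw [h1, dist_self]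
      rw [diag_rho hμ, h2]
      simp
  rw [suppVal, hval, csSup_singleton]

lemma rhoI_self (hμ : IsIPM μ) : rhoI μ μ = 0 := by
  refine le_antisymm ?_ (rhoI_nonneg μ μ)
  rw [rhoI_eq]
  refine csInf_le (rhoSet_bddBelow μ μ) ?_
  exact ⟨fun φ => μ (φ.comp (diagC X)), diag_admissible hμ, (diag_suppVal hμ).symm⟩

lemma eq_of_rhoI_zero {μ₁ μ₂ : C(X, ℝ) → ℝ} (hμ₁ : IsIPM μ₁) (hμ₂ : IsIPM μ₂)
    (h0 : rhoI μ₁ μ₂ = 0) : μ₁ = μ₂ := by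
  funext φ
  have key : ∀ ε : ℝ, 0 < ε → μ₁ φ ≤ μ₂ φ + ε ∧ μ₂ φ ≤ μ₁ φ + ε := by
    intro ε hε
    have hUC : UniformContinuous φ := CompactSpace.uniformContinuous_of_continuous φ.continuous
    obtain ⟨δ, hδpos, hδ⟩ := Metric.uniformContinuous_iff.mp hUC ε hε
    obtain ⟨r, hr, hrlt⟩ := Real.lt_sInf_add_pos (rhoSet_nonempty hμ₁ hμ₂) hδpos
    rw [← rhoI_eq, h0, zero_add] at hrlt
    obtain ⟨ξ, hξ, rfl⟩ := hr
    have hsupp : ∀ p : X × X, ∀ a : ℝ, idemDensity ξ p = (a : EReal) →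
        dist (φ p.1) (φ p.2) < ε := by
      intro p a hd
      have hp : p ∈ idemSupp ξ := mem_supp_of_density_real hd
      exact hδ (lt_of_le_of_lt (dist_le_suppVal hp) hrlt)
    constructor
    · have := ipm_le_ipm_add hξ.1 (φ.comp ⟨Prod.fst, continuous_fst⟩)
        (φ.comp ⟨Prod.snd, continuous_snd⟩) ε (fun p a hd => by
          have := hsupp p a hd
          rw [Real.dist_eq] at this
          have h2 := le_abs_self (φ p.1 - φ p.2)
          show φ p.1 ≤ φ p.2 + ε
          linarith)
      rwa [hξ.2.1, hξ.2.2] at this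
    · have := ipm_le_ipm_add hξ.1 (φ.comp ⟨Prod.snd, continuous_snd⟩)
        (φ.comp ⟨Prod.fst, continuous_fst⟩) ε (fun p a hd => by
          have := hsupp p a hd
          rw [Real.dist_eq, abs_sub_comm] at this
          have h2 := le_abs_self (φ p.2 - φ p.1)
          show φ p.2 ≤ φ p.1 + ε
          linarith)
      rwa [hξ.2.1, hξ.2.2] at this
  refine le_antisymm ?_ ?_ <;> refine le_of_forall_pos_le_add fun ε hε => ?_
  · exact (key ε hε).1
  · exact (key ε hε).2

end Main3

section Comp
variable {X : Type*} [MetricSpace X] [CompactSpace X] [Nonempty X]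
variable {μ₁ μ₂ μ₃ : C(X, ℝ) → ℝ} {ξ₁₂ ξ₂₃ : C(X × X, ℝ) → ℝ}

def compSet (μ₂ : C(X, ℝ) → ℝ) (ξ₁₂ ξ₂₃ : C(X × X, ℝ) → ℝ) (φ : C(X × X, ℝ)) : Set ℝ :=
  {r | ∃ x y z : X, ∃ a b c : ℝ, idemDensity ξ₁₂ (x, y) = (a : EReal) ∧
    idemDensity ξ₂₃ (y, z) = (b : EReal) ∧ idemDensity μ₂ y = (c : EReal) ∧
    r = a + b - c + φ (x, z)}

def compIPM (μ₂ : C(X, ℝ) → ℝ) (ξ₁₂ ξ₂₃ : C(X × X, ℝ) → ℝ) (φ : C(X × X, ℝ)) : ℝ :=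
  sSup (compSet μ₂ ξ₁₂ ξ₂₃ φ)

lemma comp_a_le_c (h12 : IsAdmissible μ₁ μ₂ ξ₁₂) {x y : X} {a c : ℝ}
    (ha : idemDensity ξ₁₂ (x, y) = (a : EReal)) (hc : idemDensity μ₂ y = (c : EReal)) :
    a ≤ c := by
  have h : idemDensity ξ₁₂ (x, y) ≤ idemDensity μ₂ y := density_le_push h12.1 h12.2.2 (x, y)
  rw [ha, hc] at h
  exact_mod_cast h

lemma comp_b_le_c (h23 : IsAdmissible μ₂ μ₃ ξ₂₃) {y z : X} {b c : ℝ}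
    (hb : idemDensity ξ₂₃ (y, z) = (b : EReal)) (hc : idemDensity μ₂ y = (c : EReal)) :
    b ≤ c := by
  have h : idemDensity ξ₂₃ (y, z) ≤ idemDensity μ₂ y := density_le_push h23.1 h23.2.1 (y, z)
  rw [hb, hc] at h
  exact_mod_cast h

lemma comp_b_nonpos (h23 : IsAdmissible μ₂ μ₃ ξ₂₃) {y z : X} {b : ℝ}
    (hb : idemDensity ξ₂₃ (y, z) = (b : EReal)) : b ≤ 0 := by
  have h := density_le_zero h23.1 (y, z)
  rw [hb] at h
  exact_mod_cast h

lemma compSet_bddAbove (h12 : IsAdmissible μ₁ μ₂ ξ₁₂) (h23 : IsAdmissible μ₂ μ₃ ξ₂₃)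
    (φ : C(X × X, ℝ)) : BddAbove (compSet μ₂ ξ₁₂ ξ₂₃ φ) := by
  refine ⟨‖φ‖, fun r hr => ?_⟩
  obtain ⟨x, y, z, a, b, c, ha, hb, hc, rfl⟩ := hr
  have h1 : a ≤ c := comp_a_le_c h12 ha hc
  have hb0 : b ≤ 0 := comp_b_nonpos h23 hb
  have h3 : φ (x, z) ≤ ‖φ‖ := by
    have h4 := φ.norm_coe_le_norm (x, z)
    rw [Real.norm_eq_abs] at h4
    have h5 := le_abs_self (φ (x, z))
    linarith
  linarith

lemma comp_approx_x (h2 : IsIPM μ₂) (h12 : IsAdmissible μ₁ μ₂ ξ₁₂)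
    {y : X} {c : ℝ} (hc : idemDensity μ₂ y = (c : EReal)) {ε : ℝ} (hε : 0 < ε) :
    ∃ x : X, ∃ a : ℝ, idemDensity ξ₁₂ (x, y) = (a : EReal) ∧ c - ε ≤ a := by
  obtain ⟨⟨px, py⟩, b, hp, hd, hb⟩ := exists_fiber_density h12.1 h2 h12.2.2 hc hε
  have hpy : py = y := hp
  subst hpy
  exact ⟨px, b, hd, hb⟩

lemma comp_approx_z (h2 : IsIPM μ₂) (h23 : IsAdmissible μ₂ μ₃ ξ₂₃)
    {y : X} {c : ℝ} (hc : idemDensity μ₂ y = (c : EReal)) {ε : ℝ} (hε : 0 < ε) :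
    ∃ z : X, ∃ b : ℝ, idemDensity ξ₂₃ (y, z) = (b : EReal) ∧ c - ε ≤ b := by
  obtain ⟨⟨py, pz⟩, b, hp, hd, hb⟩ := exists_fiber_density h23.1 h2 h23.2.1 hc hε
  have hpy : py = y := hp
  subst hpy
  exact ⟨pz, b, hd, hb⟩

lemma comp_mid_real (h2 : IsIPM μ₂) (h12 : IsAdmissible μ₁ μ₂ ξ₁₂)
    {x y : X} {a : ℝ} (ha : idemDensity ξ₁₂ (x, y) = (a : EReal)) :
    ∃ c : ℝ, idemDensity μ₂ y = (c : EReal) := by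
  rcases ereal_bot_or_real (density_ne_top h2 y) with h | h
  · exfalso
    have hle : idemDensity ξ₁₂ (x, y) ≤ idemDensity μ₂ y := density_le_push h12.1 h12.2.2 (x, y)
    rw [ha, h] at hle
    exact (EReal.coe_ne_bot a) (le_bot_iff.mp hle)
  · exact h

lemma comp_mid_real' (h2 : IsIPM μ₂) (h23 : IsAdmissible μ₂ μ₃ ξ₂₃)
    {y z : X} {b : ℝ} (hb : idemDensity ξ₂₃ (y, z) = (b : EReal)) :
    ∃ c : ℝ, idemDensity μ₂ y = (c : EReal) := by
  rcases ereal_bot_or_real (density_ne_top h2 y) with h | h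
  · exfalso
    have hle : idemDensity ξ₂₃ (y, z) ≤ idemDensity μ₂ y := density_le_push h23.1 h23.2.1 (y, z)
    rw [hb, h] at hle
    exact (EReal.coe_ne_bot b) (le_bot_iff.mp hle)
  · exact h

lemma compSet_nonempty (h2 : IsIPM μ₂) (h12 : IsAdmissible μ₁ μ₂ ξ₁₂)
    (h23 : IsAdmissible μ₂ μ₃ ξ₂₃) (φ : C(X × X, ℝ)) :
    (compSet μ₂ ξ₁₂ ξ₂₃ φ).Nonempty := by
  obtain ⟨⟨x, y⟩, a, ha⟩ := exists_density_real h12.1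
  obtain ⟨c, hc⟩ := comp_mid_real h2 h12 ha
  obtain ⟨z, b, hb, _⟩ := comp_approx_z h2 h23 hc one_pos
  exact ⟨a + b - c + φ (x, z), x, y, z, a, b, c, ha, hb, hc, rfl⟩

end Comp

section Comp2
variable {X : Type*} [MetricSpace X] [CompactSpace X] [Nonempty X]
variable {μ₁ μ₂ μ₃ : C(X, ℝ) → ℝ} {ξ₁₂ ξ₂₃ : C(X × X, ℝ) → ℝ}

lemma comp_elem_nonpos (h12 : IsAdmissible μ₁ μ₂ ξ₁₂) (h23 : IsAdmissible μ₂ μ₃ ξ₂₃)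
    {x y z : X} {a b c : ℝ} (ha : idemDensity ξ₁₂ (x, y) = (a : EReal))
    (hb : idemDensity ξ₂₃ (y, z) = (b : EReal)) (hc : idemDensity μ₂ y = (c : EReal)) :
    a + b - c ≤ 0 := by
  have h1 : a ≤ c := comp_a_le_c h12 ha hc
  have h2 : b ≤ 0 := comp_b_nonpos h23 hb
  linarith

lemma comp_elem_ge (h2 : IsIPM μ₂) (h12 : IsAdmissible μ₁ μ₂ ξ₁₂)
    (h23 : IsAdmissible μ₂ μ₃ ξ₂₃) {ε : ℝ} (hε : 0 < ε) :
    ∃ x y z : X, ∃ a b c : ℝ, idemDensity ξ₁₂ (x, y) = (a : EReal) ∧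
      idemDensity ξ₂₃ (y, z) = (b : EReal) ∧ idemDensity μ₂ y = (c : EReal) ∧
      -ε ≤ a + b - c := by
  have hε3 : 0 < ε / 3 := by linarith
  obtain ⟨y, c, hc, hcge⟩ := exists_density_near_zero h2 hε3
  obtain ⟨x, a, ha, hage⟩ := comp_approx_x h2 h12 hc hε3
  obtain ⟨z, b, hb, hbge⟩ := comp_approx_z h2 h23 hc hε3
  exact ⟨x, y, z, a, b, c, ha, hb, hc, by linarith⟩

lemma comp_isIPM (h2 : IsIPM μ₂) (h12 : IsAdmissible μ₁ μ₂ ξ₁₂)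
    (h23 : IsAdmissible μ₂ μ₃ ξ₂₃) : IsIPM (compIPM μ₂ ξ₁₂ ξ₂₃) := by
  have hne := compSet_nonempty h2 h12 h23 (X := X)
  have hbdd := compSet_bddAbove h12 h23 (X := X)
  refine ⟨?_, ?_, ?_⟩
  · -- constants
    intro c
    refine le_antisymm (csSup_le (hne _) ?_) ?_
    · rintro r ⟨x, y, z, a, b, c', ha, hb, hc', rfl⟩
      have h1 : a + b - c' ≤ 0 := comp_elem_nonpos h12 h23 ha hb hc'
      have h3 : (ContinuousMap.const (X × X) c) (x, z) = c := rfl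
      rw [h3]; linarith
    · refine le_of_forall_pos_le_add fun ε hε => ?_
      obtain ⟨x, y, z, a, b, c', ha, hb, hc', hge⟩ := comp_elem_ge h2 h12 h23 hε
      have hmem : a + b - c' + (ContinuousMap.const (X × X) c) (x, z) ∈
          compSet μ₂ ξ₁₂ ξ₂₃ (ContinuousMap.const (X × X) c) :=
        ⟨x, y, z, a, b, c', ha, hb, hc', rfl⟩
      have h4 := le_csSup (hbdd _) hmem
      have h3 : (ContinuousMap.const (X × X) c) (x, z) = c := rfl
      rw [h3] at h4
      unfold compIPM
      linarith
  · -- additivity of constants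
    intro c φ
    refine le_antisymm (csSup_le (hne _) ?_) ?_
    · rintro r ⟨x, y, z, a, b, c', ha, hb, hc', rfl⟩
      have h3 : (ContinuousMap.const (X × X) c + φ) (x, z) = c + φ (x, z) := by
        simp
      have hmem : a + b - c' + φ (x, z) ∈ compSet μ₂ ξ₁₂ ξ₂₃ φ :=
        ⟨x, y, z, a, b, c', ha, hb, hc', rfl⟩
      have h4 := le_csSup (hbdd _) hmem
      rw [h3]
      unfold compIPM
      linarith
    · have hstep : compIPM μ₂ ξ₁₂ ξ₂₃ φ ≤
          sSup (compSet μ₂ ξ₁₂ ξ₂₃ (ContinuousMap.const (X × X) c + φ)) - c := by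
        refine csSup_le (hne _) ?_
        rintro r ⟨x, y, z, a, b, c', ha, hb, hc', rfl⟩
        have hmem : a + b - c' + (ContinuousMap.const (X × X) c + φ) (x, z) ∈
            compSet μ₂ ξ₁₂ ξ₂₃ (ContinuousMap.const (X × X) c + φ) :=
          ⟨x, y, z, a, b, c', ha, hb, hc', rfl⟩
        have h4 := le_csSup (hbdd _) hmem
        have h3 : (ContinuousMap.const (X × X) c + φ) (x, z) = c + φ (x, z) := by simp
        rw [h3] at h4
        linarith
      unfold compIPM at *
      linarith
  · -- sup
    intro φ ψ
    refine le_antisymm (csSup_le (hne _) ?_) ?_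
    · rintro r ⟨x, y, z, a, b, c', ha, hb, hc', rfl⟩
      have h3 : (φ ⊔ ψ) (x, z) = max (φ (x, z)) (ψ (x, z)) := by
        simp [ContinuousMap.sup_apply]
      have h4 : a + b - c' + (φ ⊔ ψ) (x, z) =
          max (a + b - c' + φ (x, z)) (a + b - c' + ψ (x, z)) := by
        rw [h3, max_add_add_left]
      rw [h4]
      refine max_le_max ?_ ?_
      · exact le_csSup (hbdd _) ⟨x, y, z, a, b, c', ha, hb, hc', rfl⟩
      · exact le_csSup (hbdd _) ⟨x, y, z, a, b, c', ha, hb, hc', rfl⟩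
    · refine max_le ?_ ?_ <;>
      · refine mySSup_le_sSup (hne _) (hbdd _) ?_
        rintro r ⟨x, y, z, a, b, c', ha, hb, hc', rfl⟩
        refine ⟨a + b - c' + (φ ⊔ ψ) (x, z), ⟨x, y, z, a, b, c', ha, hb, hc', rfl⟩, ?_⟩
        have h3 : (φ ⊔ ψ) (x, z) = max (φ (x, z)) (ψ (x, z)) := by
          simp [ContinuousMap.sup_apply]
        rw [h3]
        first
        | exact add_le_add_right (le_max_left _ _) _
        | exact add_le_add_right (le_max_right _ _) _

lemma comp_marginal_fst (h2 : IsIPM μ₂) (h12 : IsAdmissible μ₁ μ₂ ξ₁₂)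
    (h23 : IsAdmissible μ₂ μ₃ ξ₂₃) (φ : C(X, ℝ)) :
    compIPM μ₂ ξ₁₂ ξ₂₃ (φ.comp ⟨Prod.fst, continuous_fst⟩) = μ₁ φ := by
  set Φ : C(X × X, ℝ) := φ.comp ⟨Prod.fst, continuous_fst⟩ with hΦ
  have hξΦ : ξ₁₂ Φ = μ₁ φ := h12.2.1 φ
  rw [← hξΦ, ipm_eq_sSup_reprSet h12.1]
  refine mySSup_eq_sSup (compSet_nonempty h2 h12 h23 _) (reprSet_nonempty h12.1 _)
    (compSet_bddAbove h12 h23 _) (reprSet_bddAbove h12.1 _) ?_ ?_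
  · rintro r ⟨x, y, z, a, b, c', ha, hb, hc', rfl⟩
    refine ⟨a + Φ (x, y), ⟨(x, y), a, ha, rfl⟩, ?_⟩
    have h1 : b ≤ c' := comp_b_le_c h23 hb hc'
    have h3 : Φ (x, z) = Φ (x, y) := rfl
    rw [h3]
    linarith
  · rintro r ⟨p, a, hd, rfl⟩ ε hε
    have hd' : idemDensity ξ₁₂ (p.1, p.2) = (a : EReal) := by
      rw [Prod.mk.eta]; exact hd
    obtain ⟨c', hc'⟩ := comp_mid_real h2 h12 hd'
    obtain ⟨z, b, hb, hbge⟩ := comp_approx_z h2 h23 hc' hε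
    refine ⟨a + b - c' + Φ (p.1, z), ⟨p.1, p.2, z, a, b, c', hd', hb, hc', rfl⟩, ?_⟩
    have h3 : Φ (p.1, z) = Φ p := rfl
    rw [h3]
    linarith

lemma comp_marginal_snd (h2 : IsIPM μ₂) (h12 : IsAdmissible μ₁ μ₂ ξ₁₂)
    (h23 : IsAdmissible μ₂ μ₃ ξ₂₃) (φ : C(X, ℝ)) :
    compIPM μ₂ ξ₁₂ ξ₂₃ (φ.comp ⟨Prod.snd, continuous_snd⟩) = μ₃ φ := by
  set Φ : C(X × X, ℝ) := φ.comp ⟨Prod.snd, continuous_snd⟩ with hΦ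
  have hξΦ : ξ₂₃ Φ = μ₃ φ := h23.2.2 φ
  rw [← hξΦ, ipm_eq_sSup_reprSet h23.1]
  refine mySSup_eq_sSup (compSet_nonempty h2 h12 h23 _) (reprSet_nonempty h23.1 _)
    (compSet_bddAbove h12 h23 _) (reprSet_bddAbove h23.1 _) ?_ ?_
  · rintro r ⟨x, y, z, a, b, c', ha, hb, hc', rfl⟩
    refine ⟨b + Φ (y, z), ⟨(y, z), b, hb, rfl⟩, ?_⟩
    have h1 : a ≤ c' := comp_a_le_c h12 ha hc'
    have h3 : Φ (x, z) = Φ (y, z) := rfl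
    rw [h3]
    linarith
  · rintro r ⟨p, b, hd, rfl⟩ ε hε
    have hd' : idemDensity ξ₂₃ (p.1, p.2) = (b : EReal) := by
      rw [Prod.mk.eta]; exact hd
    obtain ⟨c', hc'⟩ := comp_mid_real' h2 h23 hd'
    obtain ⟨x, a, ha, hage⟩ := comp_approx_x h2 h12 hc' hε
    refine ⟨a + b - c' + Φ (x, p.2), ⟨x, p.1, p.2, a, b, c', ha, hd', hc', rfl⟩, ?_⟩
    have h3 : Φ (x, p.2) = Φ p := rfl
    rw [h3]
    linarith

lemma comp_admissible (h2 : IsIPM μ₂) (h12 : IsAdmissible μ₁ μ₂ ξ₁₂)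
    (h23 : IsAdmissible μ₂ μ₃ ξ₂₃) : IsAdmissible μ₁ μ₃ (compIPM μ₂ ξ₁₂ ξ₂₃) :=
  ⟨comp_isIPM h2 h12 h23, comp_marginal_fst h2 h12 h23, comp_marginal_snd h2 h12 h23⟩

end Comp2

section Comp3
variable {X : Type*} [MetricSpace X] [CompactSpace X] [Nonempty X]
variable {μ₁ μ₂ μ₃ : C(X, ℝ) → ℝ} {ξ₁₂ ξ₂₃ : C(X × X, ℝ) → ℝ}

lemma comp_rho_le (h2 : IsIPM μ₂) (h12 : IsAdmissible μ₁ μ₂ ξ₁₂)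
    (h23 : IsAdmissible μ₂ μ₃ ξ₂₃) :
    compIPM μ₂ ξ₁₂ ξ₂₃ (rhoFun X) ≤ suppVal ξ₁₂ + suppVal ξ₂₃ := by
  refine csSup_le (compSet_nonempty h2 h12 h23 _) ?_
  rintro r ⟨x, y, z, a, b, c', ha, hb, hc', rfl⟩
  have h1 : a + b - c' ≤ 0 := comp_elem_nonpos h12 h23 ha hb hc'
  have h4 : (rhoFun X) (x, z) = dist x z := rfl
  have h5 : dist x z ≤ dist x y + dist y z := dist_triangle x y z
  have h6 : dist x y ≤ suppVal ξ₁₂ := dist_le_suppVal (mem_supp_of_density_real ha)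
  have h7 : dist y z ≤ suppVal ξ₂₃ := dist_le_suppVal (mem_supp_of_density_real hb)
  rw [h4]
  linarith

lemma comp_supp_dist_le (h2 : IsIPM μ₂) (h12 : IsAdmissible μ₁ μ₂ ξ₁₂)
    (h23 : IsAdmissible μ₂ μ₃ ξ₂₃) {p : X × X}
    (hp : p ∈ idemSupp (compIPM μ₂ ξ₁₂ ξ₂₃)) :
    dist p.1 p.2 ≤ suppVal ξ₁₂ + suppVal ξ₂₃ := by
  by_contra hcon
  push_neg at hcon
  set R := suppVal ξ₁₂ + suppVal ξ₂₃ with hR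
  have hδ : 0 < (dist p.1 p.2 - R) / 2 := by linarith
  set δ := (dist p.1 p.2 - R) / 2 with hδdef
  have hbot : idemDensity (compIPM μ₂ ξ₁₂ ξ₂₃) p = ⊥ := by
    refine density_bot_of_forall_nat (comp_isIPM h2 h12 h23) (fun n => ?_)
    have hcont : Continuous fun q : X × X => -(n : ℝ) * min 1 (dist q p / δ) := by
      apply Continuous.mul continuous_const
      exact Continuous.min continuous_const ((continuous_id.dist continuous_const).div_const δ)
    set φn : C(X × X, ℝ) := ⟨fun q => -(n : ℝ) * min 1 (dist q p / δ), hcont⟩ with hφn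
    have h1 : φn ≤ 0 := by
      rw [ContinuousMap.le_def]
      intro q
      have hmin : (0:ℝ) ≤ min 1 (dist q p / δ) := le_min one_pos.le (by positivity)
      show -(n : ℝ) * min 1 (dist q p / δ) ≤ 0
      have hn : (0:ℝ) ≤ (n:ℝ) := Nat.cast_nonneg n
      exact mul_nonpos_of_nonpos_of_nonneg (by linarith) hmin
    have hp2 : φn p = 0 := by
      show -(n : ℝ) * min 1 (dist p p / δ) = 0
      simp
    have hval : compIPM μ₂ ξ₁₂ ξ₂₃ φn ≤ -(n:ℝ) := by
      refine csSup_le (compSet_nonempty h2 h12 h23 _) ?_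
      rintro r ⟨u, y, w, a, b, c', ha, hb, hc', rfl⟩
      have he : a + b - c' ≤ 0 := comp_elem_nonpos h12 h23 ha hb hc'
      have h6 : dist u y ≤ suppVal ξ₁₂ := dist_le_suppVal (mem_supp_of_density_real ha)
      have h7 : dist y w ≤ suppVal ξ₂₃ := dist_le_suppVal (mem_supp_of_density_real hb)
      have h8 : dist u w ≤ R := le_trans (dist_triangle u y w) (by linarith)
      have h9 : δ ≤ dist (u, w) p := by
        rw [Prod.dist_eq]
        have t1 : dist p.1 p.2 ≤ dist p.1 u + dist u w + dist w p.2 := by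
          calc dist p.1 p.2 ≤ dist p.1 w + dist w p.2 := dist_triangle _ _ _
            _ ≤ (dist p.1 u + dist u w) + dist w p.2 :=
                add_le_add_left (dist_triangle _ _ _) _
        rcases le_total (dist u p.1) (dist w p.2) with hle | hle
        · have : δ ≤ dist w p.2 := by
            rw [dist_comm p.1 u] at t1
            rw [hδdef]
            linarith
          calc δ ≤ dist w p.2 := this
            _ = dist (u, w).2 p.2 := rfl
            _ ≤ _ := le_sup_right
        · have : δ ≤ dist u p.1 := by
            rw [dist_comm p.1 u] at t1
            rw [hδdef]
            linarith
          calc δ ≤ dist u p.1 := this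
            _ = dist (u, w).1 p.1 := rfl
            _ ≤ _ := le_sup_left
      have h10 : (1:ℝ) ≤ dist (u, w) p / δ := (one_le_div hδ).mpr h9
      have h11 : φn (u, w) = -(n:ℝ) := by
        show -(n : ℝ) * min 1 (dist (u, w) p / δ) = -(n:ℝ)
        rw [min_eq_left h10, mul_one]
      rw [h11]
      linarith
    have hd := density_le_test (comp_isIPM h2 h12 h23) h1 hp2 (z := p)
    calc idemDensity (compIPM μ₂ ξ₁₂ ξ₂₃) p ≤ ((compIPM μ₂ ξ₁₂ ξ₂₃ φn : ℝ) : EReal) := hd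
      _ ≤ ((-(n:ℝ) : ℝ) : EReal) := by exact_mod_cast hval
  rw [idemSupp, Set.mem_setOf_eq, hbot] at hp
  exact lt_irrefl _ hp

lemma comp_suppVal_le (h2 : IsIPM μ₂) (h12 : IsAdmissible μ₁ μ₂ ξ₁₂)
    (h23 : IsAdmissible μ₂ μ₃ ξ₂₃) :
    suppVal (compIPM μ₂ ξ₁₂ ξ₂₃) ≤ suppVal ξ₁₂ + suppVal ξ₂₃ := by
  refine Real.sSup_le ?_ (add_nonneg (suppVal_nonneg h12.1) (suppVal_nonneg h23.1))
  rintro s ⟨p, hp, rfl⟩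
  exact max_le (comp_rho_le h2 h12 h23) (comp_supp_dist_le h2 h12 h23 hp)

lemma rhoI_triangle (hμ₁ : IsIPM μ₁) (hμ₂ : IsIPM μ₂) (hμ₃ : IsIPM μ₃) :
    rhoI μ₁ μ₃ ≤ rhoI μ₁ μ₂ + rhoI μ₂ μ₃ := by
  refine le_of_forall_pos_le_add fun ε hε => ?_
  have hε2 : 0 < ε / 2 := by linarith
  obtain ⟨r12, hr12mem, hr12⟩ := Real.lt_sInf_add_pos (rhoSet_nonempty hμ₁ hμ₂) hε2
  obtain ⟨r23, hr23mem, hr23⟩ := Real.lt_sInf_add_pos (rhoSet_nonempty hμ₂ hμ₃) hε2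
  obtain ⟨ξ₁₂, h12, rfl⟩ := hr12mem
  obtain ⟨ξ₂₃, h23, rfl⟩ := hr23mem
  have hle : rhoI μ₁ μ₃ ≤ suppVal (compIPM μ₂ ξ₁₂ ξ₂₃) := by
    rw [rhoI_eq]
    exact csInf_le (rhoSet_bddBelow _ _) ⟨_, comp_admissible hμ₂ h12 h23, rfl⟩
  have hcomp := comp_suppVal_le hμ₂ h12 h23
  rw [rhoI_eq μ₁ μ₂, rhoI_eq μ₂ μ₃]
  linarith

end Comp3


theorem stmt10 {X : Type*} [MetricSpace X] [CompactSpace X] :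
    ∀ μ₁ μ₂ μ₃ : C(X, ℝ) → ℝ, IsIPM μ₁ → IsIPM μ₂ → IsIPM μ₃ →
      0 ≤ rhoI μ₁ μ₂ ∧ rhoI μ₁ μ₂ = rhoI μ₂ μ₁ ∧
        (rhoI μ₁ μ₂ = 0 ↔ μ₁ = μ₂) ∧
        rhoI μ₁ μ₃ ≤ rhoI μ₁ μ₂ + rhoI μ₂ μ₃ := by
  intro μ₁ μ₂ μ₃ h1 h2 h3
  rcases isEmpty_or_nonempty X with hX | hX
  · exfalso
    have e0 := h1.1 0
    have e1 := h1.1 1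
    have heq : (ContinuousMap.const X (0:ℝ)) = ContinuousMap.const X (1:ℝ) := by
      ext x
      exact hX.elim x
    rw [heq] at e0
    rw [e0] at e1
    norm_num at e1
  · refine ⟨rhoI_nonneg μ₁ μ₂, rhoI_symm μ₁ μ₂, ?_, rhoI_triangle h1 h2 h3⟩
    constructor
    · exact fun h0 => eq_of_rhoI_zero h1 h2 h0
    · intro he
      rw [he]
      exact rhoI_self h2
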